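/- Let H be the divided-power bialgebra over R with basis D⁽ⁱ⁾ for i ≥ 0, multiplication D⁽ⁱ⁾D⁽ʲ⁾ = C(i+j,i) D⁽ⁱ⁺ʲ⁾, and coproduct Δ(D⁽ⁱ⁾) = Σⱼ D⁽ʲ⁾⊗D⁽ⁱ⁻ʲ⁾. If M = S*(Φ) is the symmetric algebra of an R-module Φ, then the universal measuring algebra satisfies H(S*(Φ)) ≅ S*(H⊗Φ). -/

import Mathlib

open TensorProduct Coalgebra

/-- A bundled commutative algebra over `R`. -/
structure CommAlgebraOver (R : Type) [CommRing R] : Type 1 where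
  carrier : Type
  [commRing : CommRing carrier]
  [algebra : Algebra R carrier]

attribute [instance] CommAlgebraOver.commRing CommAlgebraOver.algebra

/-- The map `φ : H ⊗ M → A`, `(h, m) ↦ h(m)`, satisfies `h(mn) = Σ h'(m)h''(n)`
and `h(1) = η(h)·1`. -/
def Measures (R H M A : Type) [CommRing R] [AddCommGroup H] [Module R H]
    [Coalgebra R H] [CommRing M] [Algebra R M] [CommRing A] [Algebra R A]
    (φ : H →ₗ[R] M →ₗ[R] A) : Prop :=
  (∀ h : H, φ h 1 = algebraMap R A (counit (R := R) h)) ∧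
  (∀ (h : H) (m n : M) (ι : Type) (t : Finset ι) (h₁ h₂ : ι → H),
    comul (R := R) h = ∑ i ∈ t, h₁ i ⊗ₜ[R] h₂ i →
    φ h (m * n) = ∑ i ∈ t, φ (h₁ i) m * φ (h₂ i) n)

/-- `P` together with `ιP : Φ → P` is the symmetric algebra `S*(Φ)`: it is
universal among commutative `R`-algebras receiving a linear map from `Φ`. -/
def IsSymmetricAlgebraUniv (R Φ P : Type) [CommRing R] [AddCommGroup Φ] [Module R Φ]
    [CommRing P] [Algebra R P] (ιP : Φ →ₗ[R] P) : Prop :=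
  ∀ (B : CommAlgebraOver R) (g : Φ →ₗ[R] B.carrier),
    ∃! f : P →ₐ[R] B.carrier, ∀ x : Φ, f (ιP x) = g x

section Conv

variable (R H A : Type) [CommRing R] [AddCommGroup H] [Module R H] [Coalgebra R H]
  [CommRing A] [Algebra R A]

noncomputable def convMul (f g : H →ₗ[R] A) : H →ₗ[R] A :=
  LinearMap.mul' R A ∘ₗ TensorProduct.map f g ∘ₗ comul

noncomputable def convOne : H →ₗ[R] A :=
  Algebra.linearMap R A ∘ₗ counit

variable {R H A}

lemma convMul_repr (f g : H →ₗ[R] A) {h : H} {ι : Type*} (r : Coalgebra.Repr R h ι) :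
    convMul R H A f g h = ∑ i ∈ r.index, f (r.left i) * g (r.right i) := by
  simp only [convMul, LinearMap.comp_apply, ← r.eq, map_sum, TensorProduct.map_tmul,
    LinearMap.mul'_apply]

lemma convOne_apply (h : H) : convOne R H A h = algebraMap R A (counit (R := R) h) := rfl

lemma convMul_assoc (f g k : H →ₗ[R] A) :
    convMul R H A (convMul R H A f g) k = convMul R H A f (convMul R H A g k) := by
  ext h
  have key := Coalgebra.sum_map_tmul_tmul_eq (R := R) f g k h (repr := ℛ R h)
    (a₁ := fun i => ℛ R ((ℛ R h).left i)) (a₂ := fun i => ℛ R ((ℛ R h).right i))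
  apply_fun (LinearMap.mul' R A ∘ₗ LinearMap.lTensor A (LinearMap.mul' R A)) at key
  simp only [map_sum, LinearMap.comp_apply, LinearMap.lTensor_tmul, LinearMap.mul'_apply] at key
  rw [convMul_repr (convMul R H A f g) k (ℛ R h), convMul_repr f (convMul R H A g k) (ℛ R h)]
  calc ∑ i ∈ (ℛ R h).index, convMul R H A f g ((ℛ R h).left i) * k ((ℛ R h).right i)
      = ∑ i ∈ (ℛ R h).index, ∑ j ∈ (ℛ R ((ℛ R h).left i)).index,
          f ((ℛ R ((ℛ R h).left i)).left j) *
            (g ((ℛ R ((ℛ R h).left i)).right j) * k ((ℛ R h).right i)) := by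
        refine Finset.sum_congr rfl fun i _ => ?_
        rw [convMul_repr f g (ℛ R ((ℛ R h).left i)), Finset.sum_mul]
        simp [mul_assoc]
    _ = ∑ i ∈ (ℛ R h).index, ∑ j ∈ (ℛ R ((ℛ R h).right i)).index,
          f ((ℛ R h).left i) *
            (g ((ℛ R ((ℛ R h).right i)).left j) * k ((ℛ R ((ℛ R h).right i)).right j)) :=
        key.symm
    _ = ∑ i ∈ (ℛ R h).index, f ((ℛ R h).left i) * convMul R H A g k ((ℛ R h).right i) := by
        refine Finset.sum_congr rfl fun i _ => ?_
        rw [convMul_repr g k (ℛ R ((ℛ R h).right i)), Finset.mul_sum]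

lemma convOne_mul (f : H →ₗ[R] A) : convMul R H A (convOne R H A) f = f := by
  ext h
  have key := Coalgebra.sum_counit_tmul_map_eq (R := R) f h (repr := ℛ R h)
  apply_fun (TensorProduct.lid R A) at key
  simp only [map_sum, TensorProduct.lid_tmul, one_smul] at key
  rw [convMul_repr (convOne R H A) f (ℛ R h)]
  simpa [convOne_apply, Algebra.smul_def] using key

lemma convMul_one (f : H →ₗ[R] A) : convMul R H A f (convOne R H A) = f := by
  ext h
  have key := Coalgebra.sum_map_tmul_counit_eq (R := R) f h (repr := ℛ R h)
  apply_fun (TensorProduct.rid R A) at key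
  simp only [map_sum, TensorProduct.rid_tmul, one_smul] at key
  rw [convMul_repr f (convOne R H A) (ℛ R h)]
  simpa [convOne_apply, Algebra.smul_def, mul_comm] using key

lemma convMul_comm
    (hcoc : ∀ h : H, TensorProduct.comm R H H (comul (R := R) h) = comul (R := R) h)
    (f g : H →ₗ[R] A) : convMul R H A f g = convMul R H A g f := by
  ext h
  have swap : ∀ z : H ⊗[R] H,
      LinearMap.mul' R A (TensorProduct.map g f z) =
        LinearMap.mul' R A (TensorProduct.map f g (TensorProduct.comm R H H z)) := by
    intro z
    induction z with
    | zero => simp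
    | tmul a b => simp [mul_comm]
    | add x y hx hy => simp [map_add, hx, hy]
  calc convMul R H A f g h
      = LinearMap.mul' R A (TensorProduct.map f g (comul (R := R) h)) := rfl
    _ = LinearMap.mul' R A (TensorProduct.map f g
          (TensorProduct.comm R H H (comul (R := R) h))) := by rw [hcoc]
    _ = convMul R H A g f h := (swap _).symm

variable (R H A)

@[reducible]
noncomputable def convCommRing
    (hcoc : ∀ h : H, TensorProduct.comm R H H (comul (R := R) h) = comul (R := R) h) :
    CommRing (H →ₗ[R] A) :=
  { (inferInstance : AddCommGroup (H →ₗ[R] A)) with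
    mul := convMul R H A
    one := convOne R H A
    left_distrib := fun f g k => by
      show convMul R H A f (g + k) = convMul R H A f g + convMul R H A f k
      ext h
      rw [LinearMap.add_apply, convMul_repr f (g + k) (ℛ R h), convMul_repr f g (ℛ R h),
        convMul_repr f k (ℛ R h), ← Finset.sum_add_distrib]
      simp [mul_add]
    right_distrib := fun f g k => by
      show convMul R H A (f + g) k = convMul R H A f k + convMul R H A g k
      ext h
      rw [LinearMap.add_apply, convMul_repr (f + g) k (ℛ R h), convMul_repr f k (ℛ R h),
        convMul_repr g k (ℛ R h), ← Finset.sum_add_distrib]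
      simp [add_mul]
    zero_mul := fun f => by
      show convMul R H A 0 f = 0
      ext h
      rw [convMul_repr 0 f (ℛ R h)]
      simp
    mul_zero := fun f => by
      show convMul R H A f 0 = 0
      ext h
      rw [convMul_repr f 0 (ℛ R h)]
      simp
    mul_assoc := convMul_assoc
    one_mul := convOne_mul
    mul_one := convMul_one
    mul_comm := convMul_comm hcoc }

@[reducible]
noncomputable def convAlgebra
    (hcoc : ∀ h : H, TensorProduct.comm R H H (comul (R := R) h) = comul (R := R) h) :
    letI := convCommRing R H A hcoc
    Algebra R (H →ₗ[R] A) :=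
  letI := convCommRing R H A hcoc
  Algebra.ofModule
    (fun r x y => by
      show convMul R H A (r • x) y = r • convMul R H A x y
      ext h
      rw [LinearMap.smul_apply, convMul_repr (r • x) y (ℛ R h), convMul_repr x y (ℛ R h),
        Finset.smul_sum]
      simp [smul_mul_assoc])
    (fun r x y => by
      show convMul R H A x (r • y) = r • convMul R H A x y
      ext h
      rw [LinearMap.smul_apply, convMul_repr x (r • y) (ℛ R h), convMul_repr x y (ℛ R h),
        Finset.smul_sum]
      simp [mul_smul_comm])

end Conv

/-- Let `H` be the divided-power bialgebra with basis `D⁽ⁱ⁾`, `i ≥ 0`, where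
`D⁽ⁱ⁾D⁽ʲ⁾ = C(i+j,i) D⁽ⁱ⁺ʲ⁾` and `Δ(D⁽ⁱ⁾) = Σⱼ D⁽ʲ⁾ ⊗ D⁽ⁱ⁻ʲ⁾`.  For an
`R`-module `Φ` with symmetric algebra `S*(Φ)`, the universal measuring algebra
satisfies `H(S*(Φ)) ≅ S*(H ⊗ Φ)`. -/
theorem measuring_symmetric_algebra_iso (R H Φ P Q A : Type) [CommRing R]
    [Ring H] [Bialgebra R H] (bH : Module.Basis ℕ R H)
    (hD0 : bH 0 = 1)
    (hDmul : ∀ i j : ℕ, bH i * bH j = ((i + j).choose i : R) • bH (i + j))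
    (hDcomul : ∀ n : ℕ, comul (R := R) (bH n)
      = ∑ i ∈ Finset.range (n + 1), bH i ⊗ₜ[R] bH (n - i))
    (hDcounit : ∀ n : ℕ, counit (R := R) (bH n) = if n = 0 then (1 : R) else 0)
    [AddCommGroup Φ] [Module R Φ]
    -- `P = S*(Φ)`
    [CommRing P] [Algebra R P] (ιP : Φ →ₗ[R] P) (hP : IsSymmetricAlgebraUniv R Φ P ιP)
    -- `Q = S*(H ⊗ Φ)`
    [CommRing Q] [Algebra R Q] (ιQ : H ⊗[R] Φ →ₗ[R] Q)
    (hQ : IsSymmetricAlgebraUniv R (H ⊗[R] Φ) Q ιQ)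
    -- `A = H(P)` is the universal measuring algebra of `P`
    [CommRing A] [Algebra R A] (φ : H →ₗ[R] P →ₗ[R] A)
    (hφ : Measures R H P A φ)
    (huniv : ∀ (B : CommAlgebraOver R) (ψ : H →ₗ[R] P →ₗ[R] B.carrier),
      Measures R H P B.carrier ψ →
      ∃! f : A →ₐ[R] B.carrier, ∀ (h : H) (m : P), f (φ h m) = ψ h m) :
    ∃ e : A ≃ₐ[R] Q, ∀ (h : H) (x : Φ), e (φ h (ιP x)) = ιQ (h ⊗ₜ[R] x) := by
  classical
  -- cocommutativity of H
  have hcoc : ∀ h : H, TensorProduct.comm R H H (comul (R := R) h) = comul (R := R) h := by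
    have key : (TensorProduct.comm R H H).toLinearMap ∘ₗ (comul : H →ₗ[R] H ⊗[R] H)
        = (comul : H →ₗ[R] H ⊗[R] H) := by
      apply bH.ext
      intro n
      rw [LinearMap.comp_apply, hDcomul n]
      rw [map_sum]
      simp only [LinearEquiv.coe_coe, TensorProduct.comm_tmul]
      conv_rhs => rw [← Finset.sum_range_reflect (fun i => bH i ⊗ₜ[R] bH (n - i)) (n + 1)]
      refine Finset.sum_congr rfl fun i hi => ?_
      rw [Finset.mem_range, Nat.lt_succ_iff] at hi
      have h1 : n + 1 - 1 - i = n - i := by omega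
      have h2 : n - (n - i) = i := by omega
      simp only [h1, h2]
    intro h
    exact LinearMap.congr_fun key h
  letI instQ : CommRing (H →ₗ[R] Q) := convCommRing R H Q hcoc
  letI instQA : Algebra R (H →ₗ[R] Q) := convAlgebra R H Q hcoc
  letI instA : CommRing (H →ₗ[R] A) := convCommRing R H A hcoc
  letI instAA : Algebra R (H →ₗ[R] A) := convAlgebra R H A hcoc
  -- the generator map into the convolution algebra on Q
  let g : Φ →ₗ[R] (H →ₗ[R] Q) :=
    (LinearMap.llcomp R H (H ⊗[R] Φ) Q ιQ) ∘ₗ (TensorProduct.mk R H Φ).flip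
  have hg : ∀ (x : Φ) (h : H), g x h = ιQ (h ⊗ₜ[R] x) := fun x h => rfl
  obtain ⟨f, hf, -⟩ := hP { carrier := H →ₗ[R] Q } g
  -- the measuring ψ : H → (P → Q)
  let ψ : H →ₗ[R] P →ₗ[R] Q := LinearMap.flip (f.toLinearMap : P →ₗ[R] (H →ₗ[R] Q))
  have hψval : ∀ (h : H) (m : P), ψ h m = f m h := fun h m => rfl
  have hψ : Measures R H P Q ψ := by
    constructor
    · intro h
      have h1 : f (1 : P) = 1 := map_one f
      show (f (1 : P) : H →ₗ[R] Q) h = _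
      rw [h1]
      rfl
    · intro h m n ι t h₁ h₂ hcom
      have hm : f (m * n) = f m * f n := map_mul f m n
      show (f (m * n) : H →ₗ[R] Q) h = _
      rw [hm]
      exact convMul_repr (f m) (f n) ⟨t, h₁, h₂, hcom.symm⟩
  obtain ⟨F, hF, -⟩ := huniv { carrier := Q } ψ hψ
  have hFgen : ∀ (h : H) (x : Φ), F (φ h (ιP x)) = ιQ (h ⊗ₜ[R] x) := by
    intro h x
    rw [hF]
    show (f (ιP x) : H →ₗ[R] Q) h = _
    rw [hf x]
    rfl
  -- the backward map
  let gA : H ⊗[R] Φ →ₗ[R] A := TensorProduct.lift (φ.compl₂ ιP)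
  obtain ⟨G, hG, -⟩ := hQ { carrier := A } gA
  have hGgen : ∀ (h : H) (x : Φ), G (ιQ (h ⊗ₜ[R] x)) = φ h (ιP x) := by
    intro h x
    rw [hG]
    rfl
  -- F ∘ G = id
  have hFG : F.comp G = AlgHom.id R Q := by
    obtain ⟨j, -, hjuniq⟩ := hQ { carrier := Q } ιQ
    have e1 : F.comp G = j := by
      apply hjuniq
      intro y
      rw [AlgHom.comp_apply, hG y]
      induction y with
      | zero => simp
      | tmul h x =>
        have : gA (h ⊗ₜ[R] x) = φ h (ιP x) := rfl
        rw [this, hFgen]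
      | add y z hy hz =>
        rw [map_add, map_add, map_add, hy, hz]
    have e2 : AlgHom.id R Q = j := hjuniq _ fun y => rfl
    rw [e1, e2]
  -- G ∘ F = id, via uniqueness of algebra maps P → Conv(H, A)
  have hGF : G.comp F = AlgHom.id R A := by
    -- χ : the tautological algebra map from the measuring φ
    have hχone : (φ.flip : P →ₗ[R] (H →ₗ[R] A)) 1 = 1 := by
      ext h
      show φ h 1 = convOne R H A h
      rw [hφ.1 h]
      rfl
    have hχmul : ∀ m n : P, (φ.flip : P →ₗ[R] (H →ₗ[R] A)) (m * n)
        = φ.flip m * φ.flip n := by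
      intro m n
      ext h
      show φ h (m * n) = convMul R H A (φ.flip m) (φ.flip n) h
      rw [convMul_repr (φ.flip m) (φ.flip n) (ℛ R h)]
      exact hφ.2 h m n _ (ℛ R h).index (ℛ R h).left (ℛ R h).right (ℛ R h).eq.symm
    let χ : P →ₐ[R] (H →ₗ[R] A) := AlgHom.ofLinearMap φ.flip hχone hχmul
    -- χ' : G composed with f
    let flin : P →ₗ[R] (H →ₗ[R] A) :=
      (LinearMap.llcomp R H Q A G.toLinearMap) ∘ₗ (f.toLinearMap : P →ₗ[R] (H →ₗ[R] Q))
    have hflin : ∀ (m : P) (h : H), flin m h = G (f m h) := fun m h => rfl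
    have hχ'one : flin 1 = 1 := by
      ext h
      rw [hflin]
      rw [map_one f]
      show G (convOne R H Q h) = convOne R H A h
      rw [convOne_apply, convOne_apply]
      exact G.commutes _
    have hχ'mul : ∀ m n : P, flin (m * n) = flin m * flin n := by
      intro m n
      ext h
      rw [hflin, map_mul f]
      show G (convMul R H Q (f m) (f n) h) = convMul R H A (flin m) (flin n) h
      rw [convMul_repr (f m) (f n) (ℛ R h), convMul_repr (flin m) (flin n) (ℛ R h),
        map_sum]
      exact Finset.sum_congr rfl fun i _ => map_mul G _ _
    let χ' : P →ₐ[R] (H →ₗ[R] A) := AlgHom.ofLinearMap flin hχ'one hχ'mul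
    have hgen : ∀ x : Φ, χ' (ιP x) = χ (ιP x) := by
      intro x
      ext h
      show G (f (ιP x) h) = φ h (ιP x)
      rw [hf x, hg x h, hGgen]
    obtain ⟨j, -, hjuniq⟩ := hP { carrier := H →ₗ[R] A } (χ.toLinearMap ∘ₗ ιP)
    have e1 : χ = j := hjuniq _ fun x => rfl
    have e2 : χ' = j := hjuniq _ fun x => hgen x
    have hχeq : χ = χ' := e1.trans e2.symm
    have hGF' : ∀ (h : H) (m : P), G (F (φ h m)) = φ h m := by
      intro h m
      rw [hF]
      have := LinearMap.congr_fun (DFunLike.congr_fun hχeq.symm m) h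
      exact this
    obtain ⟨j2, -, hj2uniq⟩ := huniv { carrier := A } φ hφ
    have e1 : G.comp F = j2 := hj2uniq _ fun h m => by
      rw [AlgHom.comp_apply]; exact hGF' h m
    have e2 : AlgHom.id R A = j2 := hj2uniq _ fun h m => rfl
    rw [e1, e2]
  exact ⟨AlgEquiv.ofAlgHom F G hFG hGF, hFgen⟩
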